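/- Let d be an n-distance on X that is nonincreasing under identification of variables, and let k ∈ {2,…,n} and K > 0 be such that d(x₁,…,xₙ) ≤ K·∑_{i=1}^k d(x₁,…,xₙ)ᵢᶻ for all arguments. Then for any n₁,…,n_k ≥ 1 with n₁+⋯+n_k = n, the map d'(x₁,…,x_k) = d(n₁·x₁,…,n_k·x_k) satisfies d'(x₁,…,x_k) ≤ K·∑_{i=1}^k d'(x₁,…,x_k)ᵢᶻ for all x₁,…,x_k,z ∈ X. -/

import Mathlib

open Finset Function

/-- `d` is an `n`-distance: nonnegative, vanishing exactly on constant tuples,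
symmetric, and satisfying the simplex inequality. -/
structure IsNDistance {X : Type*} {n : ℕ} (d : (Fin n → X) → ℝ) : Prop where
  nonneg : ∀ x, 0 ≤ d x
  eq_zero_iff : ∀ x, d x = 0 ↔ ∀ i j : Fin n, x i = x j
  symm : ∀ (x : Fin n → X) (σ : Equiv.Perm (Fin n)), d (x ∘ σ) = d x
  simplex : ∀ (x : Fin n → X) (z : X), d x ≤ ∑ i, d (Function.update x i z)

/-- The \$n\$-tuple obtained by repeating each \$x_j\$ exactly \$m_j\$ times. -/
def blowup {X : Type*} {k n : ℕ} (m : Fin k → ℕ) (h : ∑ j, m j = n) (x : Fin k → X) :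
    Fin n → X :=
  fun i => ((List.finRange k).flatMap fun j => List.replicate (m j) (x j)).get
    (Fin.cast (by rw [List.length_flatMap, ← h, Fin.sum_univ_def]; congr 1;
                  simp [Function.comp_def]) i)

/-! ### Auxiliary definitions and lemmas -/

/-- The list consisting of each `j : Fin k` repeated `c j` times. -/
def repList {k : ℕ} (c : Fin k → ℕ) : List (Fin k) :=
  (List.finRange k).flatMap fun j => List.replicate (c j) j

lemma repList_length {k : ℕ} (c : Fin k → ℕ) : (repList c).length = ∑ j, c j := by
  rw [repList, List.length_flatMap, Fin.sum_univ_def]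
  congr 1; simp [Function.comp_def]

lemma repList_count {k : ℕ} (c : Fin k → ℕ) (j : Fin k) : (repList c).count j = c j := by
  rw [repList, List.count_flatMap, ← Fin.sum_univ_def]
  simp [List.count_replicate]

lemma count_ofFn' {α : Type*} [DecidableEq α] {m : ℕ} (f : Fin m → α) (a : α) :
    (List.ofFn f).count a = ((Finset.univ : Finset (Fin m)).filter (fun i => f i = a)).card := by
  rw [← Multiset.coe_count, ← Fin.univ_val_map, Multiset.count_map]
  rw [Finset.card, Finset.filter_val]
  congr 1
  simp [eq_comm]

lemma card_filter_get {k n : ℕ} (l : List (Fin k)) (h : n = l.length) (j : Fin k) :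
    ((Finset.univ : Finset (Fin n)).filter (fun i => l.get (Fin.cast h i) = j)).card
      = l.count j := by
  subst h
  simp only [Fin.cast_eq_self]
  rw [← count_ofFn', List.ofFn_get]

lemma blowup_eq_comp {X : Type*} {k n : ℕ} (m : Fin k → ℕ) (h : ∑ j, m j = n)
    (x : Fin k → X) (hlen : n = (repList m).length) :
    blowup m h x = x ∘ fun i => (repList m).get (Fin.cast hlen i) := by
  funext i
  show ((List.finRange k).flatMap fun j => List.replicate (m j) (x j)).get _ = _
  have heq : ((List.finRange k).flatMap fun j => List.replicate (m j) (x j))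
      = (repList m).map x := by
    rw [repList, List.map_flatMap]
    simp [List.map_replicate]
  simp only [comp_apply, List.get_eq_getElem]
  rw [List.getElem_of_eq heq, List.getElem_map]
  rfl

section Ident

variable {X : Type*} {n : ℕ}

/-- Identifying one coordinate with another does not increase `d`. -/
lemma ident_le (hn : 2 ≤ n) (d : (Fin n → X) → ℝ) (hd : IsNDistance d)
    (hni : ∀ x : Fin n → X,
      d (Function.update x ⟨n - 1, Nat.sub_lt (Nat.zero_lt_two.trans_le hn) Nat.one_pos⟩ (x ⟨0, Nat.zero_lt_two.trans_le hn⟩)) ≤ d x)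
    (w : Fin n → X) (a b : Fin n) (hab : a ≠ b) :
    d (Function.update w a (w b)) ≤ d w := by
  set z0 : Fin n := ⟨0, by omega⟩ with hz0
  set zl : Fin n := ⟨n - 1, by omega⟩ with hzl
  have h0l : z0 ≠ zl := by simp [hz0, hzl, Fin.ext_iff]; omega
  set σ₁ : Equiv.Perm (Fin n) := Equiv.swap z0 b with hσ₁
  set a' : Fin n := σ₁.symm a with ha'
  have ha'0 : a' ≠ z0 := by
    intro h
    apply hab
    have : a = σ₁ z0 := by rw [← h, ha', Equiv.apply_symm_apply]
    rw [this, hσ₁, Equiv.swap_apply_left]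
  set σ₂ : Equiv.Perm (Fin n) := Equiv.swap zl a' with hσ₂
  have h20 : σ₂ z0 = z0 := Equiv.swap_apply_of_ne_of_ne h0l (Ne.symm ha'0)
  set τ : Equiv.Perm (Fin n) := σ₂.trans σ₁ with hτ
  have hτ0 : τ z0 = b := by
    show σ₁ (σ₂ z0) = b
    rw [h20, hσ₁, Equiv.swap_apply_left]
  have hτl : τ zl = a := by
    show σ₁ (σ₂ zl) = a
    rw [hσ₂, Equiv.swap_apply_left, ha', Equiv.apply_symm_apply]
  have key := hni (w ∘ τ)
  have e1 : (w ∘ ⇑τ) z0 = w b := by simp [comp_apply, hτ0]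
  have e2 : Function.update w a (w b) ∘ ⇑τ = Function.update (w ∘ ⇑τ) zl (w b) := by
    have hsa : (Equiv.symm τ) a = zl := by rw [Equiv.symm_apply_eq, hτl]
    rw [Function.update_comp_equiv, hsa]
  calc d (Function.update w a (w b)) = d (Function.update w a (w b) ∘ ⇑τ) :=
        (hd.symm _ τ).symm
    _ = d (Function.update (w ∘ ⇑τ) zl (w b)) := by rw [e2]
    _ ≤ d (w ∘ ⇑τ) := by
        have h3 : Function.update (w ∘ ⇑τ) zl (w b) =
            Function.update (w ∘ ⇑τ) ⟨n - 1, by omega⟩ ((w ∘ ⇑τ) ⟨0, by omega⟩) := by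
          rw [e1]
        rw [h3]; exact key
    _ = d w := hd.symm _ τ

/-- Identifying the coordinates in a set `S` with values taken outside `S`
does not increase `d`. -/
lemma identMany_le (hn : 2 ≤ n) (d : (Fin n → X) → ℝ) (hd : IsNDistance d)
    (hni : ∀ x : Fin n → X,
      d (Function.update x ⟨n - 1, Nat.sub_lt (Nat.zero_lt_two.trans_le hn) Nat.one_pos⟩ (x ⟨0, Nat.zero_lt_two.trans_le hn⟩)) ≤ d x)
    (S : Finset (Fin n)) :
    ∀ (w v : Fin n → X), (∀ p, p ∉ S → v p = w p) → (∀ p ∈ S, ∃ q, q ∉ S ∧ w q = v p) →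
      d v ≤ d w := by
  classical
  induction S using Finset.induction_on with
  | empty =>
    intro w v h1 _
    have : v = w := funext fun p => h1 p (by simp)
    rw [this]
  | @insert a S haS ih =>
    intro w v h1 h2
    obtain ⟨q, hq, hwq⟩ := h2 a (Finset.mem_insert_self a S)
    have haq : a ≠ q := fun h => hq (h ▸ Finset.mem_insert_self a S)
    set w' := Function.update w a (v a) with hw'
    have step : d w' ≤ d w := by
      rw [hw', ← hwq]; exact ident_le hn d hd hni w a q haq
    have hv1 : ∀ p, p ∉ S → v p = w' p := by
      intro p hp
      rcases eq_or_ne p a with rfl | hpa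
      · rw [hw', Function.update_self]
      · rw [hw', Function.update_of_ne hpa]
        exact h1 p (by simp [hpa, hp])
    have hv2 : ∀ p ∈ S, ∃ q', q' ∉ S ∧ w' q' = v p := by
      intro p hp
      obtain ⟨q', hq', hwq'⟩ := h2 p (Finset.mem_insert_of_mem hp)
      have hq'S : q' ∉ S := fun h => hq' (Finset.mem_insert_of_mem h)
      have hq'a : q' ≠ a := fun h => hq' (h ▸ Finset.mem_insert_self a S)
      exact ⟨q', hq'S, by rw [hw', Function.update_of_ne hq'a]; exact hwq'⟩
    exact le_trans (ih w' v hv1 hv2) step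

end Ident

/-- A nonincreasing-under-identification $n$-distance satisfying a partial simplex inequality
with constant $K$ satisfies the strong $k$-simplex inequality with the same constant. -/
theorem nonincreasing_strong_simplex {X : Type*} {n : ℕ} (hn : 2 ≤ n)
    (d : (Fin n → X) → ℝ) (hd : IsNDistance d)
    (hni : ∀ x : Fin n → X,
      d (Function.update x ⟨n - 1, by omega⟩ (x ⟨0, by omega⟩)) ≤ d x)
    (k : ℕ) (hk2 : 2 ≤ k) (hkn : k ≤ n) (K : ℝ) (hK : 0 < K)
    (hpart : ∀ (x : Fin n → X) (z : X),
      d x ≤ K * ∑ i ∈ Finset.univ.filter (fun i : Fin n => (i : ℕ) < k),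
        d (Function.update x i z))
    (m : Fin k → ℕ) (hm : ∀ j, 1 ≤ m j) (hsum : ∑ j, m j = n) :
    ∀ (x : Fin k → X) (z : X),
      d (blowup m hsum x) ≤ K * ∑ i : Fin k, d (blowup m hsum (Function.update x i z)) := by
  classical
  intro x z
  -- the two index lists and the block-index functions
  have hlenB : n = (repList m).length := by rw [repList_length, hsum]
  set gB : Fin n → Fin k := fun i => (repList m).get (Fin.cast hlenB i) with hgB
  have hsum' : k + ∑ j, (m j - 1) = n := by
    calc k + ∑ j, (m j - 1) = ∑ _j : Fin k, 1 + ∑ j, (m j - 1) := by simp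
      _ = ∑ j, (1 + (m j - 1)) := (Finset.sum_add_distrib).symm
      _ = ∑ j, m j := Finset.sum_congr rfl fun j _ => by have := hm j; omega
      _ = n := hsum
  have hlenM : n = (List.finRange k ++ repList (fun j => m j - 1)).length := by
    rw [List.length_append, List.length_finRange, repList_length, hsum']
  set g' : Fin n → Fin k :=
    fun i => (List.finRange k ++ repList (fun j => m j - 1)).get (Fin.cast hlenM i) with hg'
  have hg'head : ∀ i : Fin k, g' (Fin.castLE hkn i) = i := by
    intro i
    show (List.finRange k ++ repList (fun j => m j - 1)).get _ = i
    have hi : ((Fin.cast hlenM (Fin.castLE hkn i)) : ℕ) < (List.finRange k).length := by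
      simpa using i.2
    simp only [List.get_eq_getElem]
    rw [List.getElem_append_left hi]
    rw [List.getElem_finRange]
    apply Fin.ext
    simp
  have hg'head' : ∀ (p : Fin n) (h : (p : ℕ) < k), g' p = ⟨p, h⟩ := by
    intro p h
    exact hg'head ⟨(p : ℕ), h⟩
  -- fiber cardinalities
  have cardB : ∀ j, ((Finset.univ : Finset (Fin n)).filter (fun i => gB i = j)).card = m j := by
    intro j
    rw [hgB, card_filter_get (repList m) hlenB j, repList_count]
  have cardG : ∀ j, ((Finset.univ : Finset (Fin n)).filter (fun i => g' i = j)).card = m j := by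
    intro j
    rw [hg', card_filter_get _ hlenM j, List.count_append, repList_count,
      List.count_eq_one_of_mem (List.nodup_finRange k) (List.mem_finRange j)]
    have := hm j; omega
  -- the permutation matching the fibers of `gB` and `g'`
  have ecard : ∀ j, Fintype.card {i : Fin n // gB i = j} = Fintype.card {i : Fin n // g' i = j} := by
    intro j
    rw [Fintype.card_subtype, Fintype.card_subtype, cardB j, cardG j]
  let e : ∀ j, {i : Fin n // gB i = j} ≃ {i : Fin n // g' i = j} :=
    fun j => Fintype.equivOfCardEq (ecard j)
  let σ : Equiv.Perm (Fin n) :=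
    (Equiv.sigmaFiberEquiv gB).symm.trans
      ((Equiv.sigmaCongrRight e).trans (Equiv.sigmaFiberEquiv g'))
  have hσ : ∀ i, g' (σ i) = gB i := fun i => ((e (gB i)) ⟨i, rfl⟩).2
  have hdB : ∀ y : Fin k → X, d (blowup m hsum y) = d (y ∘ g') := by
    intro y
    rw [blowup_eq_comp m hsum y hlenB]
    have hy : (y ∘ fun i => (repList m).get (Fin.cast hlenB i)) = (y ∘ g') ∘ ⇑σ := by
      funext i
      show y (gB i) = y (g' (σ i))
      rw [hσ i]
    rw [hy, hd.symm (y ∘ g') σ]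
  -- the auxiliary tuple: representatives in the first k slots, `z` elsewhere
  set u : Fin n → X := fun p => if h : (p : ℕ) < k then x ⟨p, h⟩ else z with hu
  set S : Finset (Fin n) := Finset.univ.filter (fun p : Fin n => ¬ (p : ℕ) < k) with hS
  have hmemS : ∀ p : Fin n, p ∈ S ↔ ¬ (p : ℕ) < k := by
    intro p; rw [hS]; simp
  -- Step A : d (x ∘ g') ≤ d u
  have hA : d (x ∘ g') ≤ d u := by
    apply identMany_le hn d hd hni S u (x ∘ g')
    · intro p hp
      have hpk : (p : ℕ) < k := by by_contra h; exact hp ((hmemS p).mpr h)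
      show x (g' p) = u p
      rw [hg'head' p hpk, hu]
      simp [hpk]
    · intro p _
      refine ⟨Fin.castLE hkn (g' p), ?_, ?_⟩
      · rw [hmemS]
        simpa using (g' p).2
      · show u _ = x (g' p)
        rw [hu]
        simp only [Fin.coe_castLE, Fin.is_lt, dif_pos]
    -- Step C : termwise comparison
  have hC : ∀ i : Fin k,
      d (Function.update u (Fin.castLE hkn i) z) ≤ d (blowup m hsum (Function.update x i z)) := by
    intro i
    rw [hdB (Function.update x i z)]
    apply identMany_le hn d hd hni S ((Function.update x i z) ∘ g')
      (Function.update u (Fin.castLE hkn i) z)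
    · intro p hp
      have hpk : (p : ℕ) < k := by by_contra h; exact hp ((hmemS p).mpr h)
      show Function.update u (Fin.castLE hkn i) z p = Function.update x i z (g' p)
      rw [hg'head' p hpk]
      rcases eq_or_ne (⟨(p : ℕ), hpk⟩ : Fin k) i with hpi | hpi
      · have hp' : p = Fin.castLE hkn i := by
          apply Fin.ext
          have := congrArg Fin.val hpi
          simpa using this
        subst hp'
        rw [hpi]
        simp
      · have hp' : p ≠ Fin.castLE hkn i := by
          intro h
          apply hpi
          apply Fin.ext
          have := congrArg Fin.val h
          simpa using this
        rw [Function.update_of_ne hp', Function.update_of_ne hpi, hu]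
        simp [hpk]
    · intro p hp
      have hpk : ¬ (p : ℕ) < k := (hmemS p).mp hp
      have hpc : p ≠ Fin.castLE hkn i := by
        intro h
        apply hpk
        rw [h]
        simpa using i.2
      have hvp : Function.update u (Fin.castLE hkn i) z p = z := by
        rw [Function.update_of_ne hpc, hu]
        simp [hpk]
      refine ⟨Fin.castLE hkn i, ?_, ?_⟩
      · rw [hmemS]
        simpa using i.2
      · show Function.update x i z (g' (Fin.castLE hkn i)) = _
        rw [hg'head i, Function.update_self, hvp]
  -- reindex the sum in the partial simplex inequality
  have hfilter : Finset.univ.filter (fun p : Fin n => (p : ℕ) < k)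
      = Finset.univ.map (Fin.castLEEmb hkn) := by
    ext p
    simp only [Finset.mem_filter, Finset.mem_univ, true_and, Finset.mem_map]
    constructor
    · intro hp
      exact ⟨⟨(p : ℕ), hp⟩, by apply Fin.ext; rfl⟩
    · rintro ⟨i, -, rfl⟩
      simpa using i.2
  -- conclusion
  rw [hdB x]
  calc d (x ∘ g') ≤ d u := hA
    _ ≤ K * ∑ p ∈ Finset.univ.filter (fun p : Fin n => (p : ℕ) < k),
          d (Function.update u p z) := hpart u z
    _ = K * ∑ i : Fin k, d (Function.update u (Fin.castLE hkn i) z) := by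
        rw [hfilter, Finset.sum_map]
        rfl
    _ ≤ K * ∑ i : Fin k, d (blowup m hsum (Function.update x i z)) := by
        refine mul_le_mul_of_nonneg_left (Finset.sum_le_sum fun i _ => hC i) hK.le
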